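/- For all real x, y and λ > 0, ∫_y^∞ Φ(λ + (x−z)/(2λ)) e^{−z} (z⁴/8 − z²/2 − 2) dz = (y⁴ + 4y³ + 8y² + 16y)/8 · e^{−y} Φ(λ + (x−y)/(2λ)) + (4λ⁶x − 3λ⁴x² + λ²x³ − 2λ⁸ − 8λ⁶ − x⁴/8 − 2λ²x − x³/2 + 2λ⁴ + 6λ⁴x − x² − 2x) e^{−x} (1 − Φ(λ + (y−x)/(2λ))) + (2λ⁷ − λx³/4 − λ⁵y + λ³y²/2 + λ³xy − 3λ⁵x + 3λ³x²/2 − λy³/4 − λy²x/4 − λyx²/4 − λ³y − λy² − λxy − λ³x − λx² − 4λ³ + 6λ⁵ − 2λx − 2λy − 4λ) e^{−x} φ(λ + (y−x)/(2λ)). -/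

import Mathlib

open Real MeasureTheory Filter Set
open Topology

/-- Standard normal density. -/
noncomputable def phi (t : ℝ) : ℝ := (Real.sqrt (2 * Real.pi))⁻¹ * Real.exp (-t ^ 2 / 2)

/-- Standard normal distribution function. -/
noncomputable def Phi (t : ℝ) : ℝ := ∫ s in Set.Iic t, phi s

lemma phi_nonneg (t : ℝ) : 0 ≤ phi t := by unfold phi; positivity

lemma integrable_phi : Integrable phi := by
  have h := (integrable_exp_neg_mul_sq (by norm_num : (0:ℝ) < 1/2)).const_mul
    (Real.sqrt (2 * Real.pi))⁻¹
  refine h.congr (Filter.Eventually.of_forall fun t => ?_)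
  unfold phi; ring_nf

lemma integral_phi : ∫ t, phi t = 1 := by
  unfold phi
  rw [MeasureTheory.integral_const_mul]
  have : ∀ t : ℝ, Real.exp (-t ^ 2 / 2) = Real.exp (-(1/2) * t ^ 2) := by
    intro t; ring_nf
  simp only [this, integral_gaussian]
  rw [inv_mul_eq_div, div_eq_one_iff_eq (by positivity)]
  rw [show Real.pi / (1/2) = 2 * Real.pi by ring]

lemma Phi_nonneg (t : ℝ) : 0 ≤ Phi t :=
  MeasureTheory.setIntegral_nonneg measurableSet_Iic (fun s _ => phi_nonneg s)

lemma Phi_le_one (t : ℝ) : Phi t ≤ 1 := by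
  rw [← integral_phi]
  exact MeasureTheory.setIntegral_le_integral integrable_phi
    (Filter.Eventually.of_forall (fun s => phi_nonneg s))

lemma tendsto_Phi_atTop : Tendsto Phi atTop (𝓝 1) := by
  unfold Phi
  have h := MeasureTheory.tendsto_setIntegral_of_monotone (μ := volume) (f := phi)
    (s := fun t : ℝ => Iic t) (fun t => measurableSet_Iic)
    (fun a b hab => Iic_subset_Iic.mpr hab) ?_
  · convert h using 2
    rw [Set.iUnion_Iic, MeasureTheory.setIntegral_univ, integral_phi]
  · rw [Set.iUnion_Iic]
    exact integrable_phi.integrableOn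

lemma hasDerivAt_Phi (t : ℝ) : HasDerivAt Phi (phi t) t := by
  have hint : ∀ a b : ℝ, IntervalIntegrable phi volume a b :=
    fun a b => integrable_phi.intervalIntegrable
  have hcont : Continuous phi := by
    unfold phi
    exact continuous_const.mul (by fun_prop)
  have key : ∀ u : ℝ, Phi u = Phi 0 + ∫ s in (0:ℝ)..u, phi s := by
    intro u
    rw [← intervalIntegral.integral_Iic_sub_Iic integrable_phi.integrableOn
      integrable_phi.integrableOn]
    unfold Phi; ring
  have h : HasDerivAt (fun u => Phi 0 + ∫ s in (0:ℝ)..u, phi s) (phi t) t := by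
    have := (intervalIntegral.integral_hasDerivAt_right (hint 0 t)
      hcont.aestronglyMeasurable.stronglyMeasurableAtFilter hcont.continuousAt)
    exact (this.const_add (Phi 0))
  exact h.congr_of_eventuallyEq (Filter.Eventually.of_forall key)

lemma continuous_Phi : Continuous Phi :=
  continuous_iff_continuousAt.mpr (fun t => (hasDerivAt_Phi t).continuousAt)

lemma hasDerivAt_phi (t : ℝ) : HasDerivAt phi (-t * phi t) t := by
  unfold phi
  have h1 : HasDerivAt (fun u : ℝ => -u ^ 2 / 2) (-t) t := by
    have := ((hasDerivAt_pow 2 t).neg).div_const 2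
    refine this.congr_deriv ?_; push_cast; ring
  have := (h1.exp).const_mul (Real.sqrt (2 * Real.pi))⁻¹
  refine this.congr_deriv ?_; ring

lemma exp_phi_swap {x z l : ℝ} (hl : 0 < l) :
    Real.exp (-z) * phi (l + (x - z) / (2 * l)) =
      Real.exp (-x) * phi (l + (z - x) / (2 * l)) := by
  unfold phi
  rw [mul_left_comm, mul_left_comm (Real.exp (-x)), ← Real.exp_add, ← Real.exp_add]
  congr 2
  field_simp
  ring

lemma integrableOn_pow_exp (n : ℕ) (y : ℝ) :
    IntegrableOn (fun z : ℝ => z ^ n * Real.exp (-z)) (Ioi y) := by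
  have h0 : IntegrableOn (fun z : ℝ => z ^ n * Real.exp (-z)) (Ioi 0) := by
    have := Real.GammaIntegral_convergent (s := (n + 1 : ℝ)) (by positivity)
    refine (this.congr_fun (fun z hz => ?_) measurableSet_Ioi)
    simp only [add_sub_cancel_right, Real.rpow_natCast]
    ring
  have h1 : IntegrableOn (fun z : ℝ => z ^ n * Real.exp (-z)) (Ioc y 0) := by
    apply (ContinuousOn.integrableOn_Icc (by fun_prop)).mono_set Ioc_subset_Icc_self
  refine (h1.union h0).mono_set (fun z hz => ?_)
  rcases le_or_gt z 0 with h | h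
  · exact Or.inl ⟨hz, h⟩
  · exact Or.inr h

lemma tendsto_polyexp (a4 a3 a2 a1 a0 : ℝ) :
    Tendsto (fun z : ℝ => (a4 * z ^ 4 + a3 * z ^ 3 + a2 * z ^ 2 + a1 * z + a0)
      * Real.exp (-z)) atTop (𝓝 0) := by
  have h : ∀ n : ℕ, Tendsto (fun z : ℝ => z ^ n * Real.exp (-z)) atTop (𝓝 0) :=
    Real.tendsto_pow_mul_exp_neg_atTop_nhds_zero
  have := ((((((h 4).const_mul a4).add ((h 3).const_mul a3)).add
    ((h 2).const_mul a2)).add ((h 1).const_mul a1)).add ((h 0).const_mul a0))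
  simp only [mul_zero, add_zero] at this
  refine this.congr (fun z => ?_)
  ring

lemma hasDerivAt_poly4 (a4 a3 a2 a1 a0 t : ℝ) :
    HasDerivAt (fun z : ℝ => a4 * z ^ 4 + a3 * z ^ 3 + a2 * z ^ 2 + a1 * z + a0)
      (4 * a4 * t ^ 3 + 3 * a3 * t ^ 2 + 2 * a2 * t + a1) t := by
  have h4 := (hasDerivAt_pow 4 t).const_mul a4
  have h3 := (hasDerivAt_pow 3 t).const_mul a3
  have h2 := (hasDerivAt_pow 2 t).const_mul a2
  have h1 := (hasDerivAt_id t).const_mul a1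
  have := (((h4.add h3).add h2).add h1).add_const a0
  refine this.congr_deriv ?_
  push_cast; ring

set_option maxHeartbeats 2000000 in
theorem stmt6 (x y l : ℝ) (hl : 0 < l) :
    (∫ z in Set.Ioi y, Phi (l + (x - z) / (2 * l)) * Real.exp (-z) * (z ^ 4 / 8 - z ^ 2 / 2 - 2))
      = (y ^ 4 + 4 * y ^ 3 + 8 * y ^ 2 + 16 * y) / 8 * Real.exp (-y) * Phi (l + (x - y) / (2 * l))
        + (4 * l ^ 6 * x - 3 * l ^ 4 * x ^ 2 + l ^ 2 * x ^ 3 - 2 * l ^ 8 - 8 * l ^ 6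
            - x ^ 4 / 8 - 2 * l ^ 2 * x - x ^ 3 / 2 + 2 * l ^ 4 + 6 * l ^ 4 * x - x ^ 2 - 2 * x)
          * Real.exp (-x) * (1 - Phi (l + (y - x) / (2 * l)))
        + (2 * l ^ 7 - l * x ^ 3 / 4 - l ^ 5 * y + l ^ 3 * y ^ 2 / 2 + l ^ 3 * x * y
            - 3 * l ^ 5 * x + 3 * l ^ 3 * x ^ 2 / 2 - l * y ^ 3 / 4 - l * y ^ 2 * x / 4
            - l * y * x ^ 2 / 4 - l ^ 3 * y - l * y ^ 2 - l * x * y - l ^ 3 * x - l * x ^ 2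
            - 4 * l ^ 3 + 6 * l ^ 5 - 2 * l * x - 2 * l * y - 4 * l)
          * Real.exp (-x) * phi (l + (y - x) / (2 * l)) := by
  set C : ℝ := 4 * l ^ 6 * x - 3 * l ^ 4 * x ^ 2 + l ^ 2 * x ^ 3 - 2 * l ^ 8 - 8 * l ^ 6
      - x ^ 4 / 8 - 2 * l ^ 2 * x - x ^ 3 / 2 + 2 * l ^ 4 + 6 * l ^ 4 * x - x ^ 2 - 2 * x
    with hC
  set b3 : ℝ := -l/4 with hb3
  set b2 : ℝ := l^3/2 - l*x/4 - l with hb2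
  set b1 : ℝ := -l^5 + l^3*x - l*x^2/4 - l^3 - l*x - 2*l with hb1
  set b0 : ℝ := 2*l^7 - l*x^3/4 - 3*l^5*x + 3*l^3*x^2/2 - l^3*x - l*x^2 - 4*l^3 + 6*l^5
      - 2*l*x - 4*l with hb0
  set g : ℝ → ℝ := fun z =>
    -(((1/8) * z^4 + (1/2) * z^3 + 1 * z^2 + 2 * z + 0) * Real.exp (-z)
          * Phi (l + (x - z) / (2 * l))
      + C * Real.exp (-x) * (1 - Phi (l + (z - x) / (2 * l)))
      + (0 * z^4 + b3 * z^3 + b2 * z^2 + b1 * z + b0) * Real.exp (-x)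
          * phi (l + (z - x) / (2 * l))) with hg
  have hl2 : (0:ℝ) < 2 * l := by linarith
  -- derivative
  have hderiv : ∀ z ∈ Ici y, HasDerivAt g
      (Phi (l + (x - z) / (2 * l)) * Real.exp (-z) * (z ^ 4 / 8 - z ^ 2 / 2 - 2)) z := by
    intro z _
    have hs : HasDerivAt (fun z : ℝ => l + (x - z) / (2 * l)) (-1 / (2 * l)) z := by
      have h1 : HasDerivAt (fun z : ℝ => (x - z) / (2 * l)) (-1 / (2 * l)) z :=
        ((hasDerivAt_id z).const_sub x).div_const (2 * l)
      exact h1.const_add l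
    have ht : HasDerivAt (fun z : ℝ => l + (z - x) / (2 * l)) (1 / (2 * l)) z := by
      have h1 : HasDerivAt (fun z : ℝ => (z - x) / (2 * l)) (1 / (2 * l)) z :=
        ((hasDerivAt_id z).sub_const x).div_const (2 * l)
      exact h1.const_add l
    have hP1 : HasDerivAt (fun z : ℝ => Phi (l + (x - z) / (2 * l)))
        (phi (l + (x - z) / (2 * l)) * (-1 / (2 * l))) z :=
      (hasDerivAt_Phi _).comp z hs
    have hP2 : HasDerivAt (fun z : ℝ => Phi (l + (z - x) / (2 * l)))
        (phi (l + (z - x) / (2 * l)) * (1 / (2 * l))) z :=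
      (hasDerivAt_Phi _).comp z ht
    have hq2 : HasDerivAt (fun z : ℝ => phi (l + (z - x) / (2 * l)))
        ((-(l + (z - x) / (2 * l)) * phi (l + (z - x) / (2 * l))) * (1 / (2 * l))) z :=
      (hasDerivAt_phi _).comp z ht
    have hE : HasDerivAt (fun z : ℝ => Real.exp (-z)) (-Real.exp (-z)) z := by
      simpa using (hasDerivAt_neg z).exp
    have hA := hasDerivAt_poly4 (1/8) (1/2) 1 2 0 z
    have hB := hasDerivAt_poly4 0 b3 b2 b1 b0 z
    have hT1 := (hA.mul hE).mul hP1
    have hT2 := (hP2.const_sub 1).const_mul (C * Real.exp (-x))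
    have hT3 := (hB.mul_const (Real.exp (-x))).mul hq2
    have htot := (((hT1.add hT2).add hT3)).neg
    rw [hg]
    refine htot.congr_deriv ?_
    have hswap := exp_phi_swap (x := x) (z := z) (l := l) hl
    have hl0 : l ≠ 0 := ne_of_gt hl
    rw [hb3, hb2, hb1, hb0, hC]
    linear_combination (norm := (simp only [Pi.mul_apply]; field_simp; ring))
      (((1/8) * z^4 + (1/2) * z^3 + 1 * z^2 + 2 * z) / (2*l)) * hswap
  -- integrability of the integrand
  have hfint : IntegrableOn
      (fun z => Phi (l + (x - z) / (2 * l)) * Real.exp (-z) * (z ^ 4 / 8 - z ^ 2 / 2 - 2))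
      (Ioi y) := by
    have hbint : IntegrableOn
        (fun z : ℝ => z^4 * Real.exp (-z) * (1/8) + z^2 * Real.exp (-z) * (1/2)
          + z^0 * Real.exp (-z) * 2) (Ioi y) :=
      (((integrableOn_pow_exp 4 y).mul_const _).add
        ((integrableOn_pow_exp 2 y).mul_const _)).add ((integrableOn_pow_exp 0 y).mul_const _)
    refine MeasureTheory.Integrable.mono hbint ?_ (Filter.Eventually.of_forall fun z => ?_)
    · refine Continuous.aestronglyMeasurable ?_ |>.restrict
      exact ((continuous_Phi.comp (by fun_prop)).mul (by fun_prop)).mul (by fun_prop)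
    · have h1 : |z ^ 4 / 8 - z ^ 2 / 2 - 2| ≤ z ^ 4 / 8 + z ^ 2 / 2 + 2 := by
        rw [abs_le]
        constructor <;> nlinarith [sq_nonneg z, sq_nonneg (z^2)]
      calc ‖Phi (l + (x - z) / (2 * l)) * Real.exp (-z) * (z ^ 4 / 8 - z ^ 2 / 2 - 2)‖
          = Phi (l + (x - z) / (2 * l)) * Real.exp (-z) * |z ^ 4 / 8 - z ^ 2 / 2 - 2| := by
            rw [Real.norm_eq_abs, abs_mul, abs_mul, abs_of_nonneg (Phi_nonneg _),
              abs_of_pos (Real.exp_pos _)]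
        _ ≤ 1 * Real.exp (-z) * (z ^ 4 / 8 + z ^ 2 / 2 + 2) := by
            gcongr
            exact Phi_le_one _
        _ = ‖z^4 * Real.exp (-z) * (1/8) + z^2 * Real.exp (-z) * (1/2)
              + z^0 * Real.exp (-z) * 2‖ := by
            rw [Real.norm_eq_abs, abs_of_nonneg (by positivity)]
            ring
  -- limit of g at infinity
  have htend : Tendsto g atTop (𝓝 0) := by
    rw [hg]
    have hT1 : Tendsto (fun z : ℝ => ((1/8) * z^4 + (1/2)*z^3 + 1*z^2 + 2*z + 0)
        * Real.exp (-z) * Phi (l + (x - z)/(2*l))) atTop (𝓝 0) := by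
      have hp := (tendsto_polyexp (1/8) (1/2) 1 2 0).abs
      rw [abs_zero] at hp
      refine squeeze_zero_norm (fun z => ?_) hp
      calc ‖((1/8) * z^4 + (1/2)*z^3 + 1*z^2 + 2*z + 0) * Real.exp (-z)
            * Phi (l + (x - z)/(2*l))‖
          = |((1/8) * z^4 + (1/2)*z^3 + 1*z^2 + 2*z + 0) * Real.exp (-z)|
              * |Phi (l + (x - z)/(2*l))| := by rw [Real.norm_eq_abs, abs_mul]
        _ ≤ |((1/8) * z^4 + (1/2)*z^3 + 1*z^2 + 2*z + 0) * Real.exp (-z)| * 1 := by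
            gcongr
            rw [abs_of_nonneg (Phi_nonneg _)]
            exact Phi_le_one _
        _ = |((1/8) * z^4 + (1/2)*z^3 + 1*z^2 + 2*z + 0) * Real.exp (-z)| := mul_one _
    have hlin : Tendsto (fun z : ℝ => l + (z - x) / (2 * l)) atTop atTop := by
      apply tendsto_atTop_add_const_left
      exact ((tendsto_atTop_add_const_right _ (-x) tendsto_id).atTop_div_const
        (r := 2*l) (by positivity)).congr (fun z => by simp only [id_eq]; ring)
    have hT2 : Tendsto (fun z : ℝ => C * Real.exp (-x) * (1 - Phi (l + (z - x)/(2*l))))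
        atTop (𝓝 0) := by
      have h2 := ((tendsto_Phi_atTop.comp hlin).const_sub 1).const_mul (C * Real.exp (-x))
      simpa using h2
    have hT3 : Tendsto (fun z : ℝ => (0*z^4 + b3*z^3 + b2*z^2 + b1*z + b0)
        * Real.exp (-x) * phi (l + (z - x)/(2*l))) atTop (𝓝 0) := by
      refine squeeze_zero_norm' (a := fun z => Real.exp (-x) * (Real.sqrt (2*Real.pi))⁻¹
        * |(0*z^4 + b3*z^3 + b2*z^2 + b1*z + b0) * Real.exp (-z)|) ?_ ?_
      · filter_upwards [eventually_ge_atTop (0:ℝ), eventually_ge_atTop (2*x),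
          eventually_ge_atTop (32*l^2), eventually_ge_atTop x] with z h0 h2x h32 hx
        have hu : 0 ≤ (z - x) / (2*l) := div_nonneg (by linarith) (by positivity)
        have key : 8 * l^2 * z ≤ (z - x)^2 := by nlinarith
        have h2z : 2 * z ≤ ((z - x)/(2*l))^2 := by
          rw [div_pow, le_div_iff₀ (by positivity)]
          nlinarith
        have ht2 : 2 * z ≤ (l + (z - x)/(2*l))^2 := by nlinarith
        have hexp : Real.exp (-(l + (z - x)/(2*l))^2 / 2) ≤ Real.exp (-z) := by
          apply Real.exp_le_exp.mpr; linarith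
        calc ‖(0*z^4 + b3*z^3 + b2*z^2 + b1*z + b0) * Real.exp (-x)
              * phi (l + (z - x)/(2*l))‖
            = |0*z^4 + b3*z^3 + b2*z^2 + b1*z + b0| * Real.exp (-x)
                * phi (l + (z - x)/(2*l)) := by
              rw [Real.norm_eq_abs, abs_mul, abs_mul, abs_of_pos (Real.exp_pos _),
                abs_of_nonneg (phi_nonneg _)]
          _ ≤ |0*z^4 + b3*z^3 + b2*z^2 + b1*z + b0| * Real.exp (-x)
                * ((Real.sqrt (2*Real.pi))⁻¹ * Real.exp (-z)) := by
              refine mul_le_mul_of_nonneg_left ?_ (by positivity)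
              unfold phi
              exact mul_le_mul_of_nonneg_left hexp (by positivity)
          _ = Real.exp (-x) * (Real.sqrt (2*Real.pi))⁻¹
                * |(0*z^4 + b3*z^3 + b2*z^2 + b1*z + b0) * Real.exp (-z)| := by
              rw [abs_mul, abs_of_pos (Real.exp_pos _)]
              ring
      · have h3 := ((tendsto_polyexp 0 b3 b2 b1 b0).abs).const_mul
          (Real.exp (-x) * (Real.sqrt (2*Real.pi))⁻¹)
        simpa using h3
    have h4 := ((hT1.add hT2).add hT3).neg
    simpa using h4
  have key := MeasureTheory.integral_Ioi_of_hasDerivAt_of_tendsto' hderiv hfint htend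
  rw [key, hg, hb3, hb2, hb1, hb0]
  ring
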